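/- Discrete l'Hospital monotonicity rule, case ρ nondecreasing and g·Δg > 0: if ρ is nondecreasing on [a+1,b] (ρ(n) ≤ ρ(n+1) whenever a+1 ≤ n ≤ n+1 ≤ b) and g(n)·Δg(n) > 0 for all n ∈ [a+1,b], then there exists k ∈ [a,b] such that r is nonincreasing on [a,k] (r(n−1) ≥ r(n) for all n with a+1 ≤ n ≤ k) and nondecreasing on [k,b] (r(n−1) ≤ r(n) for all n with k+1 ≤ n ≤ b). -/

import Mathlib

/-- Discrete l'Hospital monotonicity rule, case ρ nondecreasing and g·Δg > 0. -/
theorem discrete_lhospital_monotone_rule_case1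
    (a b : ℤ) (hab : a ≤ b) (f g : ℤ → ℝ)
    (hg : ∀ n : ℤ, a ≤ n → n ≤ b → g n ≠ 0)
    (hgsign : ∀ n m : ℤ, a ≤ n → n ≤ b → a ≤ m → m ≤ b → 0 < g n * g m)
    (hΔg : ∀ n : ℤ, a + 1 ≤ n → n ≤ b → g n - g (n - 1) ≠ 0)
    (hΔgsign : ∀ n m : ℤ, a + 1 ≤ n → n ≤ b → a + 1 ≤ m → m ≤ b →
      0 < (g n - g (n - 1)) * (g m - g (m - 1)))
    (hρ : ∀ n : ℤ, a + 1 ≤ n → n + 1 ≤ b →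
      (f n - f (n - 1)) / (g n - g (n - 1)) ≤ (f (n + 1) - f n) / (g (n + 1) - g n))
    (hgΔg : ∀ n : ℤ, a + 1 ≤ n → n ≤ b → 0 < g n * (g n - g (n - 1))) :
    ∃ k : ℤ, a ≤ k ∧ k ≤ b ∧
      (∀ n : ℤ, a + 1 ≤ n → n ≤ k → f n / g n ≤ f (n - 1) / g (n - 1)) ∧
      (∀ n : ℤ, k + 1 ≤ n → n ≤ b → f (n - 1) / g (n - 1) ≤ f n / g n) := by
  classical
  set D : ℤ → ℝ := fun n => f n * g (n - 1) - f (n - 1) * g n with hD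
  have hgg : ∀ n : ℤ, a + 1 ≤ n → n ≤ b → 0 < g n * g (n - 1) := fun n h1 h2 =>
    hgsign n (n - 1) (by omega) h2 (by omega) (by omega)
  have hΔgg : ∀ n : ℤ, a + 1 ≤ n → n ≤ b → 0 < (g n - g (n - 1)) * g (n - 1) := by
    intro n h1 h2
    have h3 := hgΔg n h1 h2
    have h4 := hgg n h1 h2
    nlinarith [sq_nonneg (g n)]
  have hr : ∀ n : ℤ, a + 1 ≤ n → n ≤ b →
      f n / g n - f (n - 1) / g (n - 1) = D n / (g n * g (n - 1)) := by
    intro n h1 h2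
    have e1 : g n ≠ 0 := hg n (by omega) h2
    have e2 : g (n - 1) ≠ 0 := hg (n - 1) (by omega) (by omega)
    field_simp [hD]
    ring
  have hρr : ∀ n : ℤ, a + 1 ≤ n → n ≤ b →
      (f n - f (n - 1)) / (g n - g (n - 1)) - f n / g n
        = D n / ((g n - g (n - 1)) * g n) := by
    intro n h1 h2
    have e1 : g n ≠ 0 := hg n (by omega) h2
    have e3 : g n - g (n - 1) ≠ 0 := hΔg n h1 h2
    field_simp [hD]
    ring
  have hρr' : ∀ n : ℤ, a + 1 ≤ n → n ≤ b →
      (f n - f (n - 1)) / (g n - g (n - 1)) - f (n - 1) / g (n - 1)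
        = D n / ((g n - g (n - 1)) * g (n - 1)) := by
    intro n h1 h2
    have e2 : g (n - 1) ≠ 0 := hg (n - 1) (by omega) (by omega)
    have e3 : g n - g (n - 1) ≠ 0 := hΔg n h1 h2
    field_simp [hD]
    ring
  have prop : ∀ n : ℤ, a + 1 ≤ n → n + 1 ≤ b → 0 < D n → 0 < D (n + 1) := by
    intro n h1 h2 hDn
    have hnb : n ≤ b := by omega
    have hpos1 : 0 < (g n - g (n - 1)) * g n := by
      have := hgΔg n h1 hnb; nlinarith
    have h3 : f n / g n < (f n - f (n - 1)) / (g n - g (n - 1)) := by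
      have he := hρr n h1 hnb
      have hq : 0 < (f n - f (n - 1)) / (g n - g (n - 1)) - f n / g n := by
        rw [he]; exact div_pos hDn hpos1
      linarith
    have h5 : f n / g n < (f (n + 1) - f n) / (g (n + 1) - g n) :=
      lt_of_lt_of_le h3 (hρ n h1 h2)
    have h1' : a + 1 ≤ n + 1 := by omega
    have hpos2 : 0 < (g (n + 1) - g (n + 1 - 1)) * g (n + 1 - 1) := hΔgg (n + 1) h1' h2
    have h6 := hρr' (n + 1) h1' h2
    have hsimp : (n : ℤ) + 1 - 1 = n := by ring
    rw [hsimp] at h6 hpos2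
    have hfin : 0 < D (n + 1) / ((g (n + 1) - g n) * g n) := by
      rw [← h6]; linarith
    have := mul_pos hfin hpos2
    rwa [div_mul_cancel₀ _ (ne_of_gt hpos2)] at this
  by_cases hex : ∃ n : ℤ, (a + 1 ≤ n ∧ n ≤ b) ∧ 0 < D n
  · obtain ⟨n₀, ⟨⟨hn1, hn2⟩, hn3⟩, hmin⟩ := Int.exists_least_of_bdd
      (P := fun n => (a + 1 ≤ n ∧ n ≤ b) ∧ 0 < D n) ⟨a + 1, fun z hz => hz.1.1⟩ hex
    refine ⟨n₀ - 1, by omega, by omega, ?_, ?_⟩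
    · intro n h1 h2
      have hnb : n ≤ b := by omega
      have hDn : D n ≤ 0 := by
        by_contra h
        push_neg at h
        have := hmin n ⟨⟨h1, hnb⟩, h⟩
        omega
      have he := hr n h1 hnb
      have hdp := hgg n h1 hnb
      have : f n / g n - f (n - 1) / g (n - 1) ≤ 0 := by
        rw [he]; exact div_nonpos_of_nonpos_of_nonneg hDn (le_of_lt hdp)
      linarith
    · intro n h1 h2
      have key : ∀ m : ℤ, n₀ ≤ m → m ≤ b → 0 < D m := by
        intro m hm
        refine Int.le_induction (motive := fun m _ => m ≤ b → 0 < D m) ?_ ?_ m hm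
        · intro _; exact hn3
        · intro m hm ih hmb
          exact prop m (by omega) hmb (ih (by omega))
      have hDn : 0 < D n := key n (by omega) h2
      have h1' : a + 1 ≤ n := by omega
      have he := hr n h1' h2
      have hdp := hgg n h1' h2
      have : 0 < f n / g n - f (n - 1) / g (n - 1) := by
        rw [he]; exact div_pos hDn hdp
      linarith
  · refine ⟨b, hab, le_refl b, ?_, by omega⟩
    intro n h1 h2
    have hDn : D n ≤ 0 := by
      by_contra h
      push_neg at h
      exact hex ⟨n, ⟨h1, h2⟩, h⟩
    have he := hr n h1 h2
    have hdp := hgg n h1 h2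
    have : f n / g n - f (n - 1) / g (n - 1) ≤ 0 := by
      rw [he]; exact div_nonpos_of_nonpos_of_nonneg hDn (le_of_lt hdp)
    linarith
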